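/- Let w ∈ W be rationally smooth (i.e. the rank generating function of the lower Bruhat interval [e,w] is palindromic) and let w = uv be a parabolic decomposition with u ∈ W_J the maximal element of W_J below w and v ∈ ᴶW. Then every simple reflection of J appearing in a reduced word of v is a right descent of u. -/

import Mathlib

/-- The strong Bruhat order on a Coxeter group: the reflexive-transitive closure of the
relation relating `a` to `a * t` (`t` a reflection) when the length increases. -/
def CoxeterSystem.bruhatLE {B W : Type*} [Group W] {M : CoxeterMatrix B}
    (cs : CoxeterSystem M W) : W → W → Prop :=
  Relation.ReflTransGen (fun a b => cs.length a < cs.length b ∧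
    ∃ t : W, cs.IsReflection t ∧ b = a * t)

namespace BruhatAux
open List CoxeterSystem

variable {B W : Type*} [Group W] {M : CoxeterMatrix B} (cs : CoxeterSystem M W)

local prefix:100 "s" => cs.simple
local prefix:100 "π" => cs.wordProd
local prefix:100 "ℓ" => cs.length

noncomputable local instance : DecidableEq W := Classical.decEq W
noncomputable local instance : DecidableEq B := Classical.decEq B

/-- The underlying function of the reflection-sign permutation attached to a simple
reflection. -/
noncomputable def sigmaFun (i : B) : W × ℤˣ → W × ℤˣ :=
  fun p => (s i * p.1 * s i, if p.1 = s i then -p.2 else p.2)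

theorem sigmaFun_involutive (i : B) : Function.Involutive (sigmaFun cs i) := by
  intro p
  unfold sigmaFun
  have hss : s i * s i = 1 := cs.simple_mul_simple_self i
  have h1 : s i * (s i * p.1 * s i) * s i = p.1 := by
    calc s i * (s i * p.1 * s i) * s i = (s i * s i) * p.1 * (s i * s i) := by group
    _ = p.1 := by rw [hss]; group
  have h2 : (s i * p.1 * s i = s i) ↔ (p.1 = s i) := by
    constructor
    · intro h
      calc p.1 = s i * (s i * p.1 * s i) * s i := h1.symm
      _ = s i * s i * s i := by rw [h]
      _ = s i := by rw [hss]; group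
    · intro h
      rw [h]
      calc s i * s i * s i = s i * (s i * s i) := by group
      _ = s i := by rw [hss]; group
  dsimp only
  simp only [h1, h2]
  split_ifs with h
  · simp
  · simp

/-- The reflection-sign permutation attached to a simple reflection. -/
noncomputable def sigma (i : B) : Equiv.Perm (W × ℤˣ) :=
  (sigmaFun_involutive cs i).toPerm

theorem sigma_apply (i : B) (p : W × ℤˣ) :
    sigma cs i p = (s i * p.1 * s i, if p.1 = s i then -p.2 else p.2) := rfl


/-- Sign contribution of one application of `sigma i * sigma j` when the tracked
reflection is `c`. -/
noncomputable def gfac (i j : B) (c : W) : ℤˣ :=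
  (if c = s j then -1 else 1) * (if c = s j * s i * s j then -1 else 1)

theorem sigma_mul_apply (i j : B) (c : W) (e : ℤˣ) :
    (sigma cs i * sigma cs j) (c, e) =
      ((s i * s j) * c * (s j * s i), e * gfac cs i j c) := by
  have : (sigma cs i * sigma cs j) (c, e) = sigma cs i (sigma cs j (c, e)) := rfl
  rw [this, sigma_apply, sigma_apply]
  have hfst : s i * (s j * c * s j) * s i = (s i * s j) * c * (s j * s i) := by group
  have hcond : (s j * c * s j = s i) ↔ (c = s j * s i * s j) := by
    have hss : s j * s j = 1 := cs.simple_mul_simple_self j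
    constructor
    · intro h
      calc c = (s j * s j) * c * (s j * s j) := by rw [hss]; group
      _ = s j * (s j * c * s j) * s j := by group
      _ = s j * s i * s j := by rw [h]
    · intro h
      rw [h]
      calc s j * (s j * s i * s j) * s j = (s j * s j) * s i * (s j * s j) := by group
      _ = s i := by rw [hss]; group
  dsimp only
  rw [hfst]
  unfold gfac
  congr 1
  simp only [hcond]
  split_ifs <;> simp

theorem sigma_mul_pow_apply (i j : B) (n : ℕ) (t : W) (e : ℤˣ) :
    ((sigma cs i * sigma cs j) ^ n) (t, e) =
      ((s i * s j) ^ n * t * ((s j * s i) ^ n),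
        e * ∏ k ∈ Finset.range n, gfac cs i j ((s i * s j) ^ k * t * ((s j * s i) ^ k))) := by
  induction n generalizing t e with
  | zero => simp
  | succ n ih =>
    rw [pow_succ, Equiv.Perm.mul_apply, sigma_mul_apply, ih]
    refine Prod.ext ?_ ?_
    · show (s i * s j) ^ n * ((s i * s j) * t * (s j * s i)) * (s j * s i) ^ n = _
      rw [pow_succ, pow_succ']
      simp only [mul_assoc]
    · show e * gfac cs i j t * _ = e * _
      have harg : ∀ k : ℕ, (s i * s j) ^ k * ((s i * s j) * t * (s j * s i)) * (s j * s i) ^ k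
          = (s i * s j) ^ (k + 1) * t * (s j * s i) ^ (k + 1) := by
        intro k
        rw [pow_succ, pow_succ']
        simp only [mul_assoc]
      simp_rw [harg]
      rw [Finset.prod_range_succ']
      simp only [pow_zero, one_mul, mul_one]
      rw [mul_assoc, mul_comm (gfac cs i j t)]

theorem conj_pow_simple (i j : B) (k : ℕ) :
    s j * (s i * s j) ^ k = (s j * s i) ^ k * s j := by
  induction k with
  | zero => simp
  | succ k ih =>
    rw [pow_succ, ← mul_assoc, ← mul_assoc, ih, pow_succ]
    group

theorem prod_double {G : Type*} [CommMonoid G] (f : ℕ → G) (m : ℕ) :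
    ∏ n ∈ Finset.range (2 * m), f n = ∏ k ∈ Finset.range m, (f (2 * k) * f (2 * k + 1)) := by
  induction m with
  | zero => simp
  | succ m ih =>
    have h2 : 2 * (m + 1) = (2 * m + 1) + 1 := by ring
    rw [h2, Finset.prod_range_succ, Finset.prod_range_succ, ih, Finset.prod_range_succ,
      mul_assoc]

theorem liftable : M.IsLiftable (fun i => (sigma cs i : Equiv.Perm (W × ℤˣ))) := by
  intro i j
  set m := M i j with hm
  apply Equiv.ext
  rintro ⟨t, e⟩
  show ((sigma cs i * sigma cs j) ^ m) (t, e) = (t, e)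
  rw [sigma_mul_pow_apply]
  have hr : (s i * s j) ^ m = 1 := cs.simple_mul_simple_pow i j
  have hq : (s j * s i) ^ m = 1 := cs.simple_mul_simple_pow' i j
  have hfst : (s i * s j) ^ m * t * (s j * s i) ^ m = t := by rw [hr, hq]; group
  rw [hfst]
  set q : W := s j * s i with hqdef
  set r : W := s i * s j with hrdef
  have hqr : ∀ k : ℕ, q ^ k * r ^ k = 1 := by
    intro k
    have : q = r⁻¹ := by rw [hqdef, hrdef, mul_inv_rev, cs.inv_simple, cs.inv_simple]
    rw [this, inv_pow, inv_mul_cancel]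
  have hrq : ∀ k : ℕ, r ^ k * q ^ k = 1 := by
    intro k
    have : q = r⁻¹ := by rw [hqdef, hrdef, mul_inv_rev, cs.inv_simple, cs.inv_simple]
    rw [this, inv_pow, mul_inv_cancel]
  have hconj : ∀ k : ℕ, s j * r ^ k = q ^ k * s j := conj_pow_simple cs i j
  set f : ℕ → ℤˣ := fun n => if t = q ^ n * s j then -1 else 1 with hf
  have hiff : ∀ k : ℕ, ∀ c : W, (r ^ k * t * q ^ k = c) ↔ (t = q ^ k * c * r ^ k) := by
    intro k c
    constructor
    · intro h
      rw [← h]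
      calc t = (q ^ k * r ^ k) * t * (q ^ k * r ^ k) := by rw [hqr]; group
      _ = q ^ k * (r ^ k * t * q ^ k) * r ^ k := by group
    · intro h
      rw [h]
      calc r ^ k * (q ^ k * c * r ^ k) * q ^ k = (r ^ k * q ^ k) * c * (r ^ k * q ^ k) := by
            group
      _ = c := by rw [hrq]; group
  have key : ∀ k, gfac cs i j (r ^ k * t * q ^ k) = f (2 * k) * f (2 * k + 1) := by
    intro k
    have e1 : q ^ k * s j * r ^ k = q ^ (2 * k) * s j := by
      calc q ^ k * s j * r ^ k = q ^ k * (s j * r ^ k) := by group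
      _ = q ^ k * (q ^ k * s j) := by rw [hconj]
      _ = q ^ (2 * k) * s j := by rw [two_mul, pow_add]; group
    have e2 : q ^ k * (s j * s i * s j) * r ^ k = q ^ (2 * k + 1) * s j := by
      calc q ^ k * (s j * s i * s j) * r ^ k = q ^ k * q * (s j * r ^ k) := by
            rw [hqdef]; group
      _ = q ^ k * q * (q ^ k * s j) := by rw [hconj]
      _ = q ^ (2 * k + 1) * s j := by
            have h2 : 2 * k + 1 = k + 1 + k := by ring
            rw [h2, pow_add, pow_add, pow_one]; group
    unfold gfac
    simp only [hiff k (s j), hiff k (s j * s i * s j), e1, e2, hf]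
  rw [Finset.prod_congr rfl (fun k _ => key k), ← prod_double, two_mul,
    Finset.prod_range_add]
  have hper : ∀ n, f (m + n) = f n := by
    intro n
    show (if t = q ^ (m + n) * s j then (-1 : ℤˣ) else 1) = (if t = q ^ n * s j then -1 else 1)
    simp only [pow_add, hq, one_mul]
  rw [Finset.prod_congr rfl (fun n _ => hper n)]
  rw [Int.units_mul_self, mul_one]


/-- The sign homomorphism into permutations of `W × ℤˣ`. -/
noncomputable def phi : W →* Equiv.Perm (W × ℤˣ) :=
  cs.lift ⟨fun i => sigma cs i, liftable cs⟩

theorem phi_simple (i : B) : phi cs (s i) = sigma cs i :=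
  cs.lift_apply_simple (liftable cs) i

/-- The key sign formula: the sign of `phi (π ω)` at `t` records the parity of the number
of occurrences of `t` in the right inversion sequence of `ω`. -/
theorem phi_wordProd (ω : List B) (t : W) (e : ℤˣ) :
    phi cs (π ω) (t, e) =
      (π ω * t * (π ω)⁻¹, e * (-1) ^ ((cs.rightInvSeq ω).count t)) := by
  induction ω generalizing t e with
  | nil => simp [rightInvSeq]
  | cons i ω ih =>
    rw [cs.wordProd_cons, map_mul, Equiv.Perm.mul_apply, ih, phi_simple, sigma_apply]
    have hris : cs.rightInvSeq (i :: ω) = ((π ω)⁻¹ * s i * π ω) :: cs.rightInvSeq ω := rfl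
    refine Prod.ext ?_ ?_
    · show s i * (π ω * t * (π ω)⁻¹) * s i = _
      rw [mul_inv_rev, cs.inv_simple]
      simp only [mul_assoc]
    · show (if π ω * t * (π ω)⁻¹ = s i then -(e * (-1) ^ ((cs.rightInvSeq ω).count t))
        else e * (-1) ^ ((cs.rightInvSeq ω).count t)) = _
      have hcond : (π ω * t * (π ω)⁻¹ = s i) ↔ (t = (π ω)⁻¹ * s i * π ω) := by
        constructor
        · intro h
          rw [← h]; group
        · intro h
          rw [h]; group
      rw [hris, List.count_cons]
      simp only [hcond, beq_iff_eq]
      by_cases h : t = (π ω)⁻¹ * s i * π ω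
      · rw [if_pos h, if_pos h.symm, pow_succ, mul_neg_one, mul_neg]
      · rw [if_neg h, if_neg (fun hc => h hc.symm), add_zero]

/-- Parity of the number of occurrences of `t` in the right inversion sequence depends
only on the product of the word. -/
theorem count_ris_parity {ω ω' : List B} (h : π ω = π ω') (t : W) :
    ((-1 : ℤˣ)) ^ ((cs.rightInvSeq ω).count t) = (-1) ^ ((cs.rightInvSeq ω').count t) := by
  have h1 := phi_wordProd cs ω t 1
  have h2 := phi_wordProd cs ω' t 1
  rw [h] at h1
  rw [h1] at h2
  have := congrArg Prod.snd h2
  simpa using this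

theorem rightInvSeq_append (α γ : List B) :
    cs.rightInvSeq (α ++ γ) =
      ((cs.rightInvSeq α).map fun x => (π γ)⁻¹ * x * π γ) ++ cs.rightInvSeq γ := by
  induction α with
  | nil => simp [rightInvSeq]
  | cons i α ih =>
    show ((π (α ++ γ))⁻¹ * s i * π (α ++ γ)) :: cs.rightInvSeq (α ++ γ) = _
    rw [ih, cs.wordProd_append]
    simp only [List.map_cons, List.cons_append, mul_inv_rev]
    congr 1
    group

theorem count_ris_append (α γ : List B) (t : W) :
    (cs.rightInvSeq (α ++ γ)).count t =
      (cs.rightInvSeq α).count (π γ * t * (π γ)⁻¹) + (cs.rightInvSeq γ).count t := by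
  rw [rightInvSeq_append, List.count_append]
  congr 1
  have hinj : Function.Injective (fun x : W => (π γ)⁻¹ * x * π γ) := by
    intro a b hab
    simpa using congrArg (fun x => (π γ) * x * (π γ)⁻¹) hab
  have hfx : (fun x : W => (π γ)⁻¹ * x * π γ) (π γ * t * (π γ)⁻¹) = t := by
    simp only
    group
  calc ((cs.rightInvSeq α).map fun x => (π γ)⁻¹ * x * π γ).count t
      = ((cs.rightInvSeq α).map fun x => (π γ)⁻¹ * x * π γ).count
          ((fun x : W => (π γ)⁻¹ * x * π γ) (π γ * t * (π γ)⁻¹)) := by rw [hfx]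
  _ = (cs.rightInvSeq α).count (π γ * t * (π γ)⁻¹) :=
      List.count_map_of_injective _ _ hinj _

/-- An explicit word for the conjugate `π α * s i * (π α)⁻¹`. -/
def buildWord (α : List B) (i : B) : List B :=
  match α with
  | [] => [i]
  | j :: α' => j :: (buildWord α' i ++ [j])

theorem buildWord_prod (α : List B) (i : B) :
    π (buildWord α i) = π α * s i * (π α)⁻¹ := by
  induction α with
  | nil => simp [buildWord]
  | cons j α ih =>
    show π (j :: (buildWord α i ++ [j])) = _
    simp only [cs.wordProd_cons, cs.wordProd_append, ih, cs.wordProd_singleton,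
      cs.wordProd_nil, mul_inv_rev, cs.inv_simple, mul_one]
    group

theorem buildWord_count_odd (α : List B) (i : B) :
    Odd ((cs.rightInvSeq (buildWord α i)).count (π α * s i * (π α)⁻¹)) := by
  induction α with
  | nil =>
    show Odd ((cs.rightInvSeq [i]).count (π [] * s i * (π [])⁻¹))
    simp [rightInvSeq]
  | cons j α ih =>
    set t' : W := π α * s i * (π α)⁻¹ with ht'
    have ht'inv : t'⁻¹ = t' := by rw [ht']; rw [mul_inv_rev, mul_inv_rev, cs.inv_simple]; group
    set t : W := π (j :: α) * s i * (π (j :: α))⁻¹ with ht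
    have htt' : t = s j * t' * s j := by
      rw [ht, ht', cs.wordProd_cons, mul_inv_rev, cs.inv_simple]
      group
    show Odd ((cs.rightInvSeq (j :: (buildWord α i ++ [j]))).count t)
    have hris : cs.rightInvSeq (j :: (buildWord α i ++ [j])) =
        ((π (buildWord α i ++ [j]))⁻¹ * s j * π (buildWord α i ++ [j])) ::
          cs.rightInvSeq (buildWord α i ++ [j]) := rfl
    rw [hris, List.count_cons]
    rw [count_ris_append]
    have hsingle : cs.rightInvSeq [j] = [s j] := by simp [rightInvSeq]
    rw [hsingle, cs.wordProd_singleton]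
    have hmid : (cs.rightInvSeq (buildWord α i)).count (s j * t * (s j)⁻¹) =
        (cs.rightInvSeq (buildWord α i)).count t' := by
      congr 1
      rw [htt', cs.inv_simple]
      calc s j * (s j * t' * s j) * s j = (s j * s j) * t' * (s j * s j) := by group
      _ = t' := by rw [cs.simple_mul_simple_self]; group
    rw [hmid]
    -- head entry
    have hw : π (buildWord α i ++ [j]) = t' * s j := by
      rw [cs.wordProd_append, buildWord_prod, cs.wordProd_singleton, ht']
    have hhead : (π (buildWord α i ++ [j]))⁻¹ * s j * π (buildWord α i ++ [j])
        = s j * t' * s j * t' * s j := by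
      rw [hw, mul_inv_rev, ht'inv, cs.inv_simple]
      group
    -- the two indicator entries are equal
    have hssj : s j * s j = 1 := cs.simple_mul_simple_self j
    have h4iff : (t' * s j = 1) ↔ (t' = s j) := by
      constructor
      · intro h3
        calc t' = t' * (s j * s j) := by rw [hssj, mul_one]
        _ = (t' * s j) * s j := by group
        _ = s j := by rw [h3, one_mul]
      · intro h4
        rw [h4, hssj]
    have hind : (t = s j * t' * s j * t' * s j) ↔ (t = s j) := by
      rw [htt']
      constructor
      · intro h
        have h2 : s j * t' * s j * 1 = s j * t' * s j * (t' * s j) := by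
          rw [mul_one]
          calc s j * t' * s j = s j * t' * s j * t' * s j := h
          _ = s j * t' * s j * (t' * s j) := by group
        have h4 : t' = s j := h4iff.mp (mul_left_cancel h2).symm
        rw [h4]
        calc s j * s j * s j = s j * (s j * s j) := by group
        _ = s j := by rw [hssj, mul_one]
      · intro h
        have h3 : t' * s j = 1 := by
          have h5 : (s j * s j) * (t' * s j) = s j * s j := by
            calc (s j * s j) * (t' * s j) = s j * (s j * t' * s j) := by group
            _ = s j * s j := by rw [h]
          calc t' * s j = 1 * (t' * s j) := by rw [one_mul]
          _ = (s j * s j) * (t' * s j) := by rw [hssj]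
          _ = s j * s j := h5
          _ = 1 := hssj
        calc s j * t' * s j = s j := h
        _ = s j * 1 * 1 := by group
        _ = s j * (t' * s j) * (t' * s j) := by rw [h3]
        _ = s j * t' * s j * t' * s j := by group
    obtain ⟨c, hc⟩ := ih
    have e1 : (if (((π (buildWord α i ++ [j]))⁻¹ * s j * π (buildWord α i ++ [j])) == t)
        then 1 else 0) = (if t = s j then 1 else 0) := by
      simp only [beq_iff_eq, hhead]
      by_cases hcase : t = s j
      · rw [if_pos (hind.mpr hcase).symm, if_pos hcase]
      · rw [if_neg (fun hh => hcase (hind.mp hh.symm)), if_neg hcase]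
    have e2 : List.count t [s j] = (if t = s j then 1 else 0) := by
      simp only [List.count_cons, List.count_nil, beq_iff_eq, zero_add]
      by_cases hcase : t = s j
      · rw [if_pos hcase.symm, if_pos hcase]
      · rw [if_neg (fun hh => hcase hh.symm), if_neg hcase]
    rw [e1, e2, hc]
    by_cases hcase : t = s j
    · rw [if_pos hcase]
      exact ⟨c + 1, by ring⟩
    · rw [if_neg hcase]
      exact ⟨c, by ring⟩

/-- Strong exchange property, membership form. -/
theorem strong_exchange {ω : List B} (hω : cs.IsReduced ω) {t : W} (ht : cs.IsReflection t)
    (hlt : ℓ (π ω * t) < ℓ (π ω)) : t ∈ cs.rightInvSeq ω := by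
  obtain ⟨q, i, hqi⟩ := ht
  have ht' : cs.IsReflection t := ⟨q, i, hqi⟩
  obtain ⟨α, hαred, hα⟩ := cs.exists_reduced_word' q
  have hγt : π (buildWord α i) = t := by
    rw [buildWord_prod, ← hα, ← hqi]
  obtain ⟨β, hβred, hβ⟩ := cs.exists_reduced_word' (π ω * t)
  have hprod : π ω = π (β ++ buildWord α i) := by
    rw [cs.wordProd_append, hγt, ← hβ, mul_assoc, ht'.mul_self, mul_one]
  have hpar := count_ris_parity cs hprod t
  have hconj : π (buildWord α i) * t * (π (buildWord α i))⁻¹ = t := by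
    rw [hγt, ht'.mul_self, ht'.inv, one_mul]
  have hzero : (cs.rightInvSeq β).count t = 0 := by
    rw [List.count_eq_zero]
    intro hmem
    have hri := cs.isRightInversion_of_mem_rightInvSeq hβred hmem
    rw [← hβ] at hri
    have h2 := hri.2
    rw [mul_assoc, ht'.mul_self, mul_one] at h2
    omega
  have hodd : Odd ((cs.rightInvSeq (buildWord α i)).count t) := by
    have hodd' := buildWord_count_odd cs α i
    have : π α * s i * (π α)⁻¹ = t := by rw [← hα, ← hqi]
    rwa [this] at hodd'
  rw [count_ris_append cs β (buildWord α i) t, hconj, hzero, zero_add] at hpar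
  by_contra hmem
  rw [List.count_eq_zero.mpr hmem, pow_zero, Odd.neg_one_pow hodd] at hpar
  exact (by decide : ¬ ((1 : ℤˣ) = -1)) hpar

/-- Strong exchange property, erase form. -/
theorem strong_exchange' {ω : List B} (hω : cs.IsReduced ω) {t : W} (ht : cs.IsReflection t)
    (hlt : ℓ (π ω * t) < ℓ (π ω)) :
    ∃ k < ω.length, π (ω.eraseIdx k) = π ω * t := by
  have hmem := strong_exchange cs hω ht hlt
  obtain ⟨k, hk, hget⟩ := List.mem_iff_getElem.mp hmem
  rw [cs.length_rightInvSeq] at hk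
  refine ⟨k, hk, ?_⟩
  rw [← cs.wordProd_mul_getD_rightInvSeq ω k]
  congr 1
  rw [List.getD_eq_getElem _ 1 (by rwa [cs.length_rightInvSeq])]
  exact hget

/-! ### Basic properties of the Bruhat order -/

theorem bruhat_refl (x : W) : cs.bruhatLE x x := Relation.ReflTransGen.refl

theorem bruhat_trans {x y z : W} (h1 : cs.bruhatLE x y) (h2 : cs.bruhatLE y z) :
    cs.bruhatLE x z := Relation.ReflTransGen.trans h1 h2

theorem bruhat_step_right {x t : W} (ht : cs.IsReflection t) (h : ℓ x < ℓ (x * t)) :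
    cs.bruhatLE x (x * t) :=
  Relation.ReflTransGen.single ⟨h, t, ht, rfl⟩

theorem bruhat_step_left {x t : W} (ht : cs.IsReflection t) (h : ℓ x < ℓ (t * x)) :
    cs.bruhatLE x (t * x) := by
  have hconj : cs.IsReflection (x⁻¹ * t * x) := by
    have := ht.conj x⁻¹
    rwa [inv_inv] at this
  have heq : t * x = x * (x⁻¹ * t * x) := by group
  rw [heq]
  exact bruhat_step_right cs hconj (by rw [← heq]; exact h)

theorem bruhat_length_le {x y : W} (h : cs.bruhatLE x y) : ℓ x ≤ ℓ y := by
  induction h with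
  | refl => exact le_rfl
  | tail h1 h2 ih => exact ih.trans (le_of_lt h2.1)

/-! ### The lifting property -/

theorem lift_aux : ∀ n : ℕ, ∀ z : W, ℓ z ≤ n → ∀ x : W, cs.bruhatLE x z → ∀ i : B,
    ℓ x < ℓ (s i * x) →
    ((ℓ z < ℓ (s i * z) → cs.bruhatLE (s i * x) (s i * z)) ∧
     (ℓ (s i * z) < ℓ z → cs.bruhatLE x (s i * z))) := by
  intro n
  induction n with
  | zero =>
    intro z hz x hxz i hx
    have hz1 : z = 1 := by
      rw [← cs.length_eq_zero_iff]
      omega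
    have hx1 : x = 1 := by
      rw [← cs.length_eq_zero_iff]
      have := bruhat_length_le cs hxz
      omega
    subst hz1; subst hx1
    exact ⟨fun _ => bruhat_refl cs _, fun h => by simp at h⟩
  | succ n ih =>
    intro z hz x hxz i hx
    constructor
    · -- L1 : lifting upwards
      intro hzi
      rcases Relation.ReflTransGen.cases_tail hxz with heq | ⟨z', hxz', hstep⟩
      · subst heq
        exact bruhat_refl cs _
      · obtain ⟨hlt, t, htr, rfl⟩ := hstep
        have hz' : ℓ z' ≤ n := by omega
        rcases cs.length_simple_mul z' i with hup | hdown
        · -- ℓ (s i * z') = ℓ z' + 1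
          have h1 : cs.bruhatLE (s i * x) (s i * z') :=
            ((ih z' hz' x hxz' i hx).1 (by omega))
          have h2 : cs.bruhatLE (s i * z') (s i * (z' * t)) := by
            have heq : s i * (z' * t) = (s i * z') * t := by group
            rw [heq]
            apply bruhat_step_right cs htr
            rw [← heq]
            have h3 : ℓ (s i * (z' * t)) = ℓ (z' * t) + 1 := by
              rcases cs.length_simple_mul (z' * t) i with h | h
              · exact h
              · omega
            omega
          exact bruhat_trans cs h1 h2
        · -- ℓ (s i * z') + 1 = ℓ z'
          have h1 : cs.bruhatLE x (s i * z') :=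
            ((ih z' hz' x hxz' i hx).2 (by omega))
          have h2 : cs.bruhatLE (s i * x) (s i * (s i * z')) := by
            apply (ih (s i * z') (by omega) x h1 i hx).1
            rw [cs.simple_mul_simple_cancel_left]
            omega
          rw [cs.simple_mul_simple_cancel_left] at h2
          have h3 : cs.bruhatLE z' (z' * t) := bruhat_step_right cs htr hlt
          have h4 : cs.bruhatLE (z' * t) (s i * (z' * t)) :=
            bruhat_step_left cs (cs.isReflection_simple i) hzi
          exact bruhat_trans cs h2 (bruhat_trans cs h3 h4)
    · -- L2 : descending
      intro hzi
      rcases Relation.ReflTransGen.cases_tail hxz with heq | ⟨z', hxz', hstep⟩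
      · subst heq
        omega
      · obtain ⟨hlt, t, htr, rfl⟩ := hstep
        have hz' : ℓ z' ≤ n := by omega
        rcases cs.length_simple_mul z' i with hup | hdown
        · -- hard case: ℓ (s i * z') = ℓ z' + 1, use strong exchange
          set z := z' * t with hzdef
          obtain ⟨β, hβred, hβ⟩ := cs.exists_reduced_word' (s i * z)
          have hωprod : π (i :: β) = z := by
            rw [cs.wordProd_cons, ← hβ, cs.simple_mul_simple_cancel_left]
          have hlen : ℓ (s i * z) + 1 = ℓ z := by
            rcases cs.length_simple_mul z i with h | h
            · omega
            · omega
          have hωred : cs.IsReduced (i :: β) := by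
            show ℓ (π (i :: β)) = (i :: β).length
            rw [hωprod, List.length_cons, ← hβred, ← hβ]
            omega
          have hzt : ℓ (π (i :: β) * t) < ℓ (π (i :: β)) := by
            rw [hωprod]
            have : z * t = z' := by rw [hzdef, mul_assoc, htr.mul_self, mul_one]
            rw [this]
            exact hlt
          obtain ⟨k, hk, herase⟩ := strong_exchange' cs hωred htr hzt
          have hz't : π (i :: β) * t = z' := by
            rw [hωprod, hzdef, mul_assoc, htr.mul_self, mul_one]
          rw [hz't] at herase
          cases k with
          | zero =>
            have hπβ : π β = z' := by simpa using herase
            have hsz : s i * z = z' := hβ.trans hπβ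
            rw [hsz]
            exact hxz'
          | succ k' =>
            have hk' : k' < β.length := by
              simpa using hk
            have herase' : z' = s i * π (β.eraseIdx k') := by
              rw [← herase, List.eraseIdx_cons_succ, cs.wordProd_cons]
            set c := π (β.eraseIdx k') with hc
            have hcz' : c = s i * z' := by
              rw [herase', cs.simple_mul_simple_cancel_left]
            have hcle : ℓ c ≤ β.length - 1 := by
              have h1 : ℓ c ≤ (β.eraseIdx k').length := by
                rw [hc]
                exact cs.length_wordProd_le _
              have h2 : (β.eraseIdx k').length = β.length - 1 := by
                rw [List.length_eraseIdx]
                simp [hk']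
              omega
            have hstep1 : cs.bruhatLE z' c := by
              rw [hcz']
              apply bruhat_step_left cs (cs.isReflection_simple i)
              omega
            have hstep2 : cs.bruhatLE c (π β) := by
              have htd := cs.wordProd_mul_getD_rightInvSeq β k'
              set t' := (cs.rightInvSeq β).getD k' 1 with ht'd
              have ht'refl : cs.IsReflection t' := by
                apply cs.isReflection_of_mem_rightInvSeq β
                rw [ht'd, List.getD_eq_getElem _ 1 (by rwa [cs.length_rightInvSeq])]
                exact List.getElem_mem _
              have hct' : c * t' = π β := by
                rw [hc, ← htd, mul_assoc, ht'refl.mul_self, mul_one]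
              have hβpos : 0 < β.length := by
                by_contra hcon
                have hβ0 : β.length = 0 := by omega
                have hβnil : β = [] := List.length_eq_zero_iff.mp hβ0
                rw [hβnil] at hk'
                simp at hk'
              have hlβ : ℓ (π β) = β.length := hβred
              rw [← hct']
              apply bruhat_step_right cs ht'refl
              rw [hct']
              omega
            have hstep3 : π β = s i * (z' * t) := by rw [← hβ, hzdef]
            rw [← hstep3]
            exact bruhat_trans cs hxz' (bruhat_trans cs hstep1 hstep2)
        · -- easy case: ℓ (s i * z') + 1 = ℓ z'
          have h1 : cs.bruhatLE x (s i * z') := (ih z' hz' x hxz' i hx).2 (by omega)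
          have heq : s i * (z' * t) = (s i * z') * t := by group
          have h2 : ℓ (s i * (z' * t)) + 1 = ℓ (z' * t) := by
            rcases cs.length_simple_mul (z' * t) i with h | h
            · omega
            · omega
          rw [heq]
          refine bruhat_trans cs h1 (bruhat_step_right cs htr ?_)
          rw [← heq]
          omega

/-- The subword property (one direction): a reduced sublist of a reduced word gives a
Bruhat-smaller element. -/
theorem bruhat_of_sublist : ∀ L : List B, cs.IsReduced L → ∀ L' : List B, L'.Sublist L →
    cs.IsReduced L' → cs.bruhatLE (π L') (π L) := by
  intro L
  induction L with
  | nil =>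
    intro _ L' hsub _
    rw [List.sublist_nil.mp hsub]
    exact bruhat_refl cs _
  | cons i m ihm =>
    intro hred L' hsub hred'
    have hm : cs.IsReduced m := by
      have := CoxeterSystem.IsReduced.drop hred (j := 1)
      simpa using this
    have hlenL : ℓ (π (i :: m)) = m.length + 1 := by
      rw [hred, List.length_cons]
    have hup : ℓ (π m) < ℓ (s i * π m) := by
      rw [← cs.wordProd_cons, hlenL, hm]
      omega
    rcases List.sublist_cons_iff.mp hsub with h | ⟨r, rfl, hr⟩
    · have h1 := ihm hm L' h hred'
      have h2 : cs.bruhatLE (π m) (π (i :: m)) := by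
        rw [cs.wordProd_cons]
        exact bruhat_step_left cs (cs.isReflection_simple i) hup
      exact bruhat_trans cs h1 h2
    · have hrred : cs.IsReduced r := by
        have := CoxeterSystem.IsReduced.drop hred' (j := 1)
        simpa using this
      have h1 := ihm hm r hr hrred
      have hx : ℓ (π r) < ℓ (s i * π r) := by
        rw [← cs.wordProd_cons, hred', List.length_cons, hrred]
        omega
      rw [cs.wordProd_cons, cs.wordProd_cons]
      exact (lift_aux cs (ℓ (π m)) (π m) le_rfl (π r) h1 i hx).1 hup

end BruhatAux

/-- Let `w` be rationally smooth (the rank generating function of `[e, w]` is palindromic)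
with parabolic decomposition `w = u * v`, where `u` is the maximal element of `W_J` below
`w` and `v` is a minimal-length coset representative. Then every simple reflection of `J`
appearing in a reduced word of `v` is a right descent of `u`. -/
theorem simple_in_v_is_right_descent_of_u {B W : Type*} [Group W] [Finite W]
    {M : CoxeterMatrix B} (cs : CoxeterSystem M W) (J : Set B) (w u v : W)
    (hu_mem : u ∈ Subgroup.closure (cs.simple '' J))
    (hu_le : cs.bruhatLE u w)
    (hu_max : ∀ x ∈ Subgroup.closure (cs.simple '' J), cs.bruhatLE x w → cs.bruhatLE x u)
    (hv : ∀ j ∈ J, cs.length (cs.simple j * v) > cs.length v)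
    (hw : w = u * v)
    (hlen : cs.length w = cs.length u + cs.length v)
    (hsmooth : ∀ i ≤ cs.length w,
      {x : W | cs.bruhatLE x w ∧ cs.length x = i}.ncard =
      {x : W | cs.bruhatLE x w ∧ cs.length x = cs.length w - i}.ncard) :
    ∀ l : List B, cs.IsReduced l → cs.wordProd l = v →
      ∀ j ∈ J, j ∈ l → cs.length (u * cs.simple j) < cs.length u := by
  intro l hlred hlv j hjJ hjl
  by_contra hcon
  push_neg at hcon
  have hgt : cs.length (u * cs.simple j) = cs.length u + 1 := by
    rcases cs.length_mul_simple u j with h | h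
    · exact h
    · omega
  obtain ⟨lu, hlured, hlu⟩ := cs.exists_reduced_word' u
  have hlulen : lu.length = cs.length u := by
    rw [hlu]
    exact hlured.symm
  have hL : cs.wordProd (lu ++ l) = w := by
    rw [cs.wordProd_append, ← hlu, hlv, hw]
  have hLred : cs.IsReduced (lu ++ l) := by
    show cs.length (cs.wordProd (lu ++ l)) = (lu ++ l).length
    rw [hL, List.length_append, hlen, hlulen, ← hlv, hlred]
  have husj : cs.wordProd (lu ++ [j]) = u * cs.simple j := by
    rw [cs.wordProd_append, ← hlu, cs.wordProd_singleton]
  have hL'red : cs.IsReduced (lu ++ [j]) := by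
    show cs.length (cs.wordProd (lu ++ [j])) = (lu ++ [j]).length
    rw [husj, List.length_append, hgt, hlulen, List.length_singleton]
  have hsub : (lu ++ [j]).Sublist (lu ++ l) :=
    (List.singleton_sublist.mpr hjl).append_left lu
  have hle : cs.bruhatLE (u * cs.simple j) w := by
    have := BruhatAux.bruhat_of_sublist cs (lu ++ l) hLred (lu ++ [j]) hsub hL'red
    rwa [hL, husj] at this
  have hmem : u * cs.simple j ∈ Subgroup.closure (cs.simple '' J) :=
    Subgroup.mul_mem _ hu_mem (Subgroup.subset_closure ⟨j, hjJ, rfl⟩)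
  have hlequ := BruhatAux.bruhat_length_le cs (hu_max _ hmem hle)
  omega
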